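/- Let X = (V,E) be a digraph with |V| = n. Suppose p and q are polynomials with rational coefficients such that for every positive integer m, p(m) equals the number of pairs (f, σ) with f : V → {1,…,m} and σ an (f,X)-friendly V-listing, and q(m) equals the corresponding count for the complement of X. Then p(−x) = (−1)^n q(x) as polynomials; in particular p(−m) = (−1)^n q(m) for every integer m. (Reciprocity for the Redei-Berge polynomial: u_X(−m) = (−1)^{|V|} u_{complement of X}(m).) -/

import Mathlib

/-- A listing `l = (σ_1, …, σ_n)` is `(f,X)`-friendly if
`f(σ_1) ≤ f(σ_2) ≤ ⋯ ≤ f(σ_n)` and `f(σ_j) < f(σ_{j+1})` for each `j ∈ [n-1]`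
with `(σ_j, σ_{j+1})` an edge of `X`. -/
def Friendly {V : Type*} (E : V → V → Prop) (f : V → ℕ) (l : List V) : Prop :=
  l.Chain' (fun u v => f u ≤ f v) ∧
  ∀ i : ℕ, ∀ (h1 : 1 ≤ i) (h2 : i ≤ l.length - 1),
    E (l.get ⟨i - 1, by omega⟩) (l.get ⟨i, by omega⟩) →
      f (l.get ⟨i - 1, by omega⟩) < f (l.get ⟨i, by omega⟩)

/-- `N_X(m)`: the number of pairs `(f, σ)` with `f : V → {1, …, m}` a coloring and `σ`
an `(f,X)`-friendly `V`-listing (the value of the Redei-Berge polynomial at `m`). -/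
noncomputable def RBCount (V : Type*) [Fintype V] (E : V → V → Prop) (m : ℕ) : ℕ :=
  Nat.card {p : (V → ℕ) × List V //
    (∀ x, 1 ≤ p.1 x ∧ p.1 x ≤ m) ∧ p.2.Nodup ∧ (∀ x, x ∈ p.2) ∧ Friendly E p.1 p.2}

/-- Edge relation of the complement digraph: pairs `(u,v)` with `u ≠ v` not in `E`. -/
def complEdge {V : Type*} (E : V → V → Prop) (u v : V) : Prop :=
  u ≠ v ∧ ¬ E u v

open Polynomial Finset

namespace RBAux

/-- Binomial-like polynomial `(1/n!) ∏_{i<n} (X + c - i)`, evaluating to `choose (x+c) n`. -/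
noncomputable def bpoly (n c : ℕ) : Polynomial ℚ :=
  C ((n.factorial : ℚ)⁻¹) * ∏ i ∈ Finset.range n, (X + C ((c : ℚ) - (i : ℚ)))

lemma prod_cast (n c m : ℕ) :
    ∏ i ∈ Finset.range n, ((m : ℚ) + ((c : ℚ) - (i : ℚ))) = ((m + c).descFactorial n : ℚ) := by
  induction n with
  | zero => simp
  | succ k ih =>
    rw [Finset.prod_range_succ, ih, Nat.descFactorial_succ]
    rcases Nat.lt_or_ge (m + c) k with h | h
    · rw [Nat.descFactorial_eq_zero_iff_lt.2 h]
      simp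
    · push_cast [Nat.cast_sub h]
      ring

lemma bpoly_eval (n c m : ℕ) : (bpoly n c).eval (m : ℚ) = ((m + c).choose n : ℚ) := by
  rw [bpoly, eval_mul, eval_C, eval_prod]
  simp only [eval_add, eval_X, eval_C]
  rw [prod_cast, Nat.descFactorial_eq_factorial_mul_choose]
  push_cast
  rw [← mul_assoc, inv_mul_cancel₀ (by exact_mod_cast n.factorial_ne_zero), one_mul]

lemma bpoly_reflect (n c : ℕ) (hc : c ≤ n - 1) :
    (bpoly n c).comp (-X) = (-1) ^ n * bpoly n (n - 1 - c) := by
  rcases Nat.eq_zero_or_pos n with rfl | hn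
  · simp [bpoly]
  rw [bpoly, bpoly, mul_comp, C_comp, Polynomial.prod_comp]
  simp only [add_comp, X_comp, C_comp]
  have h1 : ∀ i ∈ Finset.range n, -X + C ((c : ℚ) - (i : ℚ))
      = (-1) * (X + C ((i : ℚ) - (c : ℚ))) := by
    intro i _
    rw [map_sub, map_sub]
    ring
  rw [Finset.prod_congr rfl h1, Finset.prod_mul_distrib, Finset.prod_const]
  have h2 : ∏ i ∈ Finset.range n, (X + C ((i : ℚ) - (c : ℚ)))
      = ∏ i ∈ Finset.range n, (X + C (((n - 1 - c : ℕ) : ℚ) - (i : ℚ))) := by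
    rw [← Finset.prod_range_reflect (fun j => (X + C ((j : ℚ) - (c : ℚ)))) n]
    refine Finset.prod_congr rfl fun j hj => ?_
    rw [Finset.mem_range] at hj
    congr 1
    have h3 : ((n - 1 - j : ℕ) : ℚ) = (n : ℚ) - 1 - (j : ℚ) := by
      push_cast [Nat.cast_sub (by omega : j ≤ n - 1), Nat.cast_sub (by omega : 1 ≤ n)]
      ring
    have h4 : ((n - 1 - c : ℕ) : ℚ) = (n : ℚ) - 1 - (c : ℚ) := by
      push_cast [Nat.cast_sub hc, Nat.cast_sub (by omega : 1 ≤ n)]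
      ring
    rw [h3, h4]
    ring
  rw [h2, Finset.card_range]
  ring

end RBAux

namespace RBAux

lemma consec_strict {n : ℕ} {g : Fin n → ℕ}
    (H : ∀ (j : ℕ) (hj : j + 1 < n), g ⟨j, Nat.lt_of_succ_lt hj⟩ < g ⟨j + 1, hj⟩) :
    ∀ (a b : ℕ) (ha : a < n) (hb : b < n), a < b → g ⟨a, ha⟩ < g ⟨b, hb⟩ := by
  intro a b
  induction b with
  | zero => omega
  | succ k ih =>
    intro ha hb hab
    rcases Nat.lt_or_ge a k with h | h
    · exact (ih ha (by omega) h).trans (H k hb)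
    · have hak : a = k := by omega
      subst hak
      exact H a hb

lemma consec_add_le {n : ℕ} {g : Fin n → ℕ}
    (H : ∀ (j : ℕ) (hj : j + 1 < n), g ⟨j, Nat.lt_of_succ_lt hj⟩ < g ⟨j + 1, hj⟩) :
    ∀ (a b : ℕ) (ha : a < n) (hb : b < n), a ≤ b → g ⟨a, ha⟩ + (b - a) ≤ g ⟨b, hb⟩ := by
  intro a b
  induction b with
  | zero =>
    intro ha hb hab
    have : a = 0 := by omega
    subst this; simp
  | succ k ih =>
    intro ha hb hab
    rcases Nat.lt_or_ge a (k + 1) with h | h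
    · have h1 := ih ha (by omega) (by omega)
      have h2 := H k hb
      omega
    · have hak : a = k + 1 := by omega
      subst hak; simp

lemma card_strictMono (n M : ℕ) :
    Nat.card {g : Fin n → Fin M // StrictMono g} = M.choose n := by
  have e : {g : Fin n → Fin M // StrictMono g} ≃ {s : Finset (Fin M) // s.card = n} :=
    { toFun := fun g => ⟨Finset.univ.image g.1, by
        rw [Finset.card_image_of_injective _ g.2.injective, Finset.card_univ, Fintype.card_fin]⟩
      invFun := fun s => ⟨s.1.orderEmbOfFin s.2, (s.1.orderEmbOfFin s.2).strictMono⟩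
      left_inv := fun g => by
        refine Subtype.ext ?_
        exact (Finset.orderEmbOfFin_unique _
          (fun x => Finset.mem_image_of_mem _ (Finset.mem_univ x)) g.2).symm
      right_inv := fun s => by
        refine Subtype.ext ?_
        apply Finset.eq_of_subset_of_card_le
        · intro x hx
          rcases Finset.mem_image.1 hx with ⟨i, _, rfl⟩
          exact Finset.orderEmbOfFin_mem s.1 s.2 i
        · rw [s.2, Finset.card_image_of_injective _ (s.1.orderEmbOfFin s.2).strictMono.injective,
            Finset.card_univ, Fintype.card_fin] }
  rw [Nat.card_congr e, Nat.card_eq_fintype_card, Fintype.card_finset_len, Fintype.card_fin]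

lemma card_weak (n m : ℕ) (hm : 1 ≤ m) (S : Finset ℕ) (hS : S ⊆ Finset.range (n - 1)) :
    Nat.card {h : Fin n → ℕ // (∀ j, 1 ≤ h j ∧ h j ≤ m) ∧
      ∀ (j : ℕ) (hj : j + 1 < n), h ⟨j, Nat.lt_of_succ_lt hj⟩ ≤ h ⟨j + 1, hj⟩ ∧
        (j ∈ S → h ⟨j, Nat.lt_of_succ_lt hj⟩ < h ⟨j + 1, hj⟩)}
    = (m + (n - 1 - S.card)).choose n := by
  classical
  set s := S.card with hs
  set M := m + (n - 1 - s) with hM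
  have hsn : s ≤ n - 1 := by
    rw [hs, ← Finset.card_range (n - 1)]
    exact Finset.card_le_card hS
  set w : ℕ → ℕ := fun j => ((Finset.range j).filter (fun i => i ∉ S)).card with hw
  have hwadd : ∀ j, w j + ((Finset.range j).filter (fun i => i ∈ S)).card = j := by
    intro j
    rw [hw]
    rw [add_comm]
    simpa using Finset.card_filter_add_card_filter_not
      (s := Finset.range j) (p := fun i => i ∈ S)
  have hposle : ∀ j, ((Finset.range j).filter (fun i => i ∈ S)).card ≤ s := by
    intro j
    exact Finset.card_le_card (fun i hi => (Finset.mem_filter.1 hi).2)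
  have hwj : ∀ j, w j ≤ j := fun j => by have := hwadd j; omega
  have hwtop : w (n - 1) + s = n - 1 := by
    have h1 : (Finset.range (n - 1)).filter (fun i => i ∈ S) = S := by
      ext i
      simp only [Finset.mem_filter]
      exact ⟨fun h => h.2, fun h => ⟨hS h, h⟩⟩
    have := hwadd (n - 1)
    rw [h1] at this
    omega
  have hwmono : ∀ a b, a ≤ b → w a ≤ w b := by
    intro a b hab
    exact Finset.card_le_card (Finset.filter_subset_filter _ (Finset.range_subset_range.2 hab))
  have hwbound : ∀ j, j ≤ n - 1 → w j + s ≤ n - 1 := by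
    intro j hj
    have := hwmono j (n - 1) hj
    omega
  have hwS : ∀ j ∈ S, w (j + 1) = w j := by
    intro j hj
    show ((Finset.range (j+1)).filter (fun i => i ∉ S)).card = _
    rw [Finset.range_add_one, Finset.filter_insert, if_neg (by simp [hj])]
  have hwNS : ∀ j ∉ S, w (j + 1) = w j + 1 := by
    intro j hj
    show ((Finset.range (j+1)).filter (fun i => i ∉ S)).card = _
    rw [Finset.range_add_one, Finset.filter_insert, if_pos hj,
      Finset.card_insert_of_notMem (by simp)]
  rw [← card_strictMono n M]
  refine Nat.card_congr
    { toFun := fun x => ⟨fun j => ⟨x.1 j - 1 + w j.1, by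
        have h1 := (x.2.1 j).1
        have h2 := (x.2.1 j).2
        have h3 := hwbound j.1 (by omega)
        have h4 := j.2
        omega⟩, by
        have Hc : ∀ (j : ℕ) (hj : j + 1 < n),
            (fun i : Fin n => x.1 i - 1 + w i.1) ⟨j, Nat.lt_of_succ_lt hj⟩
              < (fun i : Fin n => x.1 i - 1 + w i.1) ⟨j + 1, hj⟩ := by
          intro j hj
          show x.1 ⟨j, Nat.lt_of_succ_lt hj⟩ - 1 + w j < x.1 ⟨j + 1, hj⟩ - 1 + w (j + 1)
          have h1 := (x.2.2 j hj).1
          have h4 := (x.2.1 ⟨j, Nat.lt_of_succ_lt hj⟩).1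
          have h5 := (x.2.1 ⟨j + 1, hj⟩).1
          by_cases hjS : j ∈ S
          · have h2 := (x.2.2 j hj).2 hjS
            have h3 := hwS j hjS
            omega
          · have h3 := hwNS j hjS
            omega
        intro a b hab
        rw [Fin.lt_def] at hab
        exact Fin.mk_lt_mk.mpr
          (consec_strict (g := fun i : Fin n => x.1 i - 1 + w i.1) Hc a.1 b.1 a.2 b.2 hab)⟩
      invFun := fun x => ⟨fun j => (x.1 j).1 + 1 - w j.1, by
        have Hc : ∀ (j : ℕ) (hj : j + 1 < n),
            (fun i : Fin n => (x.1 i).1) ⟨j, Nat.lt_of_succ_lt hj⟩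
              < (fun i : Fin n => (x.1 i).1) ⟨j + 1, hj⟩ := by
          intro j hj
          exact x.2 (Fin.mk_lt_mk.mpr (Nat.lt_succ_self j))
        have hle : ∀ (a : ℕ) (ha : a < n), a ≤ (x.1 ⟨a, ha⟩).1 := by
          intro a ha
          have h1 := consec_add_le (g := fun i : Fin n => (x.1 i).1) Hc 0 a
            (by omega) ha (by omega)
          omega
        have hub : ∀ (a : ℕ) (ha : a < n), (x.1 ⟨a, ha⟩).1 + ((n - 1) - a) < M := by
          intro a ha
          have h1 := consec_add_le (g := fun i : Fin n => (x.1 i).1) Hc a (n - 1)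
            ha (by omega) (by omega)
          have h2 := (x.1 ⟨n - 1, by omega⟩).2
          omega
        constructor
        · intro j
          obtain ⟨a, ha⟩ := j
          show 1 ≤ (x.1 ⟨a, ha⟩).1 + 1 - w a ∧ (x.1 ⟨a, ha⟩).1 + 1 - w a ≤ m
          have h1 := hle a ha
          have h2 := hub a ha
          have h3 := hwadd a
          have h4 := hposle a
          have h5 := hwj a
          omega
        · intro j hj
          have h1 := Hc j hj
          simp only at h1
          have h2 := hle j (Nat.lt_of_succ_lt hj)
          have h3 := hle (j + 1) hj
          have h5 := hwj j
          refine ⟨?_, fun hjS => ?_⟩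
          · show (x.1 ⟨j, Nat.lt_of_succ_lt hj⟩).1 + 1 - w j
              ≤ (x.1 ⟨j + 1, hj⟩).1 + 1 - w (j + 1)
            by_cases hjS : j ∈ S
            · have h4 := hwS j hjS
              omega
            · have h4 := hwNS j hjS
              omega
          · have h4 := hwS j hjS
            show (x.1 ⟨j, Nat.lt_of_succ_lt hj⟩).1 + 1 - w j
              < (x.1 ⟨j + 1, hj⟩).1 + 1 - w (j + 1)
            omega⟩
      left_inv := fun x => by
        refine Subtype.ext (funext fun j => ?_)
        show (x.1 j - 1 + w j.1) + 1 - w j.1 = x.1 j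
        have h1 := (x.2.1 j).1
        omega
      right_inv := fun x => by
        refine Subtype.ext (funext fun j => Fin.ext ?_)
        show ((x.1 j).1 + 1 - w j.1) - 1 + w j.1 = (x.1 j).1
        have Hc : ∀ (j : ℕ) (hj : j + 1 < n),
            (fun i : Fin n => (x.1 i).1) ⟨j, Nat.lt_of_succ_lt hj⟩
              < (fun i : Fin n => (x.1 i).1) ⟨j + 1, hj⟩ := by
          intro j hj
          exact x.2 (Fin.mk_lt_mk.mpr (Nat.lt_succ_self j))
        have h2 : j.1 ≤ (x.1 j).1 := by
          have h1 := consec_add_le (g := fun i : Fin n => (x.1 i).1) Hc 0 j.1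
            (Nat.lt_of_le_of_lt (Nat.zero_le _) j.2) j.2 (Nat.zero_le _)
          simp only [Fin.eta] at h1
          omega
        have h5 := hwj j.1
        omega }

end RBAux

namespace RBAux

variable {V : Type*} [Fintype V]

lemma friendly_iff {V : Type*} (E : V → V → Prop) (f : V → ℕ) (l : List V) :
    Friendly E f l ↔ ∀ (j : ℕ) (hj : j + 1 < l.length),
      f (l.get ⟨j, Nat.lt_of_succ_lt hj⟩) ≤ f (l.get ⟨j + 1, hj⟩) ∧
      (E (l.get ⟨j, Nat.lt_of_succ_lt hj⟩) (l.get ⟨j + 1, hj⟩) →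
        f (l.get ⟨j, Nat.lt_of_succ_lt hj⟩) < f (l.get ⟨j + 1, hj⟩)) := by
  constructor
  · rintro ⟨h1, h2⟩ j hj
    refine ⟨List.isChain_iff_getElem.1 h1 j (by omega), fun hEdge => ?_⟩
    exact h2 (j + 1) (by omega) (by omega) hEdge
  · intro h
    refine ⟨List.isChain_iff_getElem.2 fun i hi => (h i (by omega)).1, ?_⟩
    intro i h1 h2 hEdge
    have hj : (i - 1) + 1 < l.length := by omega
    have h3 := (h (i - 1) hj).2
    have hi1 : i - 1 + 1 = i := by omega
    simp only [hi1] at h3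
    exact h3 hEdge

lemma listing_length (l : List V) (hnd : l.Nodup) (hc : ∀ x, x ∈ l) :
    l.length = Fintype.card V := by
  classical
  have h1 : l.toFinset = Finset.univ :=
    Finset.eq_univ_iff_forall.2 fun x => List.mem_toFinset.2 (hc x)
  rw [← List.toFinset_card_of_nodup hnd, h1, Finset.card_univ]

open scoped Classical in
/-- number of consecutive pairs of `l` that are edges of `E` -/
noncomputable def ecount {V : Type*} (E : V → V → Prop) (l : List V) : ℕ :=
  ((Finset.range (l.length - 1)).filter (fun j => ∃ hj : j + 1 < l.length,
    E (l.get ⟨j, Nat.lt_of_succ_lt hj⟩) (l.get ⟨j + 1, hj⟩))).card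

lemma ecount_le {V : Type*} (E : V → V → Prop) (l : List V) :
    ecount E l ≤ l.length - 1 := by
  classical
  rw [ecount]
  exact le_trans (Finset.card_le_card (Finset.filter_subset _ _))
    (le_of_eq (Finset.card_range _))

lemma ecount_compl {V : Type*} (E : V → V → Prop) (l : List V) (hnd : l.Nodup) :
    ecount (complEdge E) l = (l.length - 1) - ecount E l := by
  classical
  have hinj : Function.Injective l.get := List.nodup_iff_injective_get.1 hnd
  rw [ecount, ecount]
  have h1 : ∀ j ∈ Finset.range (l.length - 1),
      ((∃ hj : j + 1 < l.length,
        complEdge E (l.get ⟨j, Nat.lt_of_succ_lt hj⟩) (l.get ⟨j + 1, hj⟩)) ↔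
      ¬ (∃ hj : j + 1 < l.length,
        E (l.get ⟨j, Nat.lt_of_succ_lt hj⟩) (l.get ⟨j + 1, hj⟩))) := by
    intro j hj
    rw [Finset.mem_range] at hj
    have hjl : j + 1 < l.length := by omega
    constructor
    · rintro ⟨hj1, hne, hnE⟩ ⟨hj2, hEd⟩
      exact hnE hEd
    · intro hn
      refine ⟨hjl, fun heq => ?_, fun hEd => hn ⟨hjl, hEd⟩⟩
      have := hinj heq
      simp only [Fin.mk.injEq] at this
      omega
  rw [Finset.filter_congr h1, Finset.filter_not]
  rw [Finset.card_sdiff_of_subset (Finset.filter_subset _ _), Finset.card_range]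

end RBAux

namespace RBAux

lemma count_fixed {V : Type*} [Fintype V] (E : V → V → Prop) (m : ℕ) (hm : 1 ≤ m)
    (l : List V) (hnd : l.Nodup) (hc : ∀ x, x ∈ l) :
    Nat.card {f : V → ℕ // (∀ x, 1 ≤ f x ∧ f x ≤ m) ∧ Friendly E f l}
      = (m + (Fintype.card V - 1 - ecount E l)).choose (Fintype.card V) := by
  classical
  set n := Fintype.card V with hn
  have hlen : l.length = n := listing_length l hnd hc
  have hinj : Function.Injective l.get := List.nodup_iff_injective_get.1 hnd
  set e : Fin n → V := fun j => l.get (Fin.cast hlen.symm j) with he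
  have hebij : Function.Bijective e := by
    constructor
    · intro a b hab
      exact Fin.cast_injective _ (hinj hab)
    · intro x
      obtain ⟨i, hi⟩ := List.mem_iff_get.1 (hc x)
      exact ⟨Fin.cast hlen i, by rw [he]; simpa using hi⟩
  let E' : Fin n ≃ V := Equiv.ofBijective e hebij
  set S : Finset ℕ := ((Finset.range (l.length - 1)).filter
    (fun j => ∃ hj : j + 1 < l.length,
      E (l.get ⟨j, Nat.lt_of_succ_lt hj⟩) (l.get ⟨j + 1, hj⟩))) with hS
  have hScard : S.card = ecount E l := by
    rw [hS, ecount]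
  have hSsub : S ⊆ Finset.range (n - 1) := by
    have h0 : S ⊆ Finset.range (l.length - 1) := by
      rw [hS]; exact Finset.filter_subset _ _
    have h1 : Finset.range (l.length - 1) = Finset.range (n - 1) := by rw [hlen]
    rw [h1] at h0
    exact h0
  have hmemS : ∀ (j : ℕ) (hj : j + 1 < n), (j ∈ S ↔
      E (l.get ⟨j, by omega⟩) (l.get ⟨j + 1, by omega⟩)) := by
    intro j hj
    rw [hS, Finset.mem_filter, Finset.mem_range]
    constructor
    · rintro ⟨-, hj2, hEd⟩
      exact hEd
    · intro hEd
      exact ⟨by omega, by omega, hEd⟩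
  have transfer : ∀ f : V → ℕ,
      ((∀ x, 1 ≤ f x ∧ f x ≤ m) ∧ Friendly E f l) ↔
      ((∀ j, 1 ≤ (fun i => f (e i)) j ∧ (fun i => f (e i)) j ≤ m) ∧
        ∀ (j : ℕ) (hj : j + 1 < n),
          (fun i => f (e i)) ⟨j, Nat.lt_of_succ_lt hj⟩ ≤ (fun i => f (e i)) ⟨j + 1, hj⟩ ∧
          (j ∈ S → (fun i => f (e i)) ⟨j, Nat.lt_of_succ_lt hj⟩
            < (fun i => f (e i)) ⟨j + 1, hj⟩)) := by
    intro f
    constructor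
    · rintro ⟨hb, hf⟩
      refine ⟨fun j => hb _, fun j hj => ?_⟩
      have h3 := (friendly_iff E f l).1 hf j (by omega)
      refine ⟨h3.1, fun hjS => h3.2 ?_⟩
      exact (hmemS j hj).1 hjS
    · rintro ⟨hb, hf⟩
      constructor
      · intro x
        obtain ⟨j, rfl⟩ := hebij.2 x
        exact hb j
      · rw [friendly_iff]
        intro j hj
        have hj2 : j + 1 < n := by omega
        have h3 := hf j hj2
        exact ⟨h3.1, fun hEd => h3.2 ((hmemS j hj2).2 hEd)⟩
  have Eq1 : {f : V → ℕ // (∀ x, 1 ≤ f x ∧ f x ≤ m) ∧ Friendly E f l} ≃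
      {h : Fin n → ℕ // (∀ j, 1 ≤ h j ∧ h j ≤ m) ∧
        ∀ (j : ℕ) (hj : j + 1 < n), h ⟨j, Nat.lt_of_succ_lt hj⟩ ≤ h ⟨j + 1, hj⟩ ∧
          (j ∈ S → h ⟨j, Nat.lt_of_succ_lt hj⟩ < h ⟨j + 1, hj⟩)} := by
    refine Equiv.subtypeEquiv (Equiv.arrowCongr E' (Equiv.refl ℕ)).symm ?_
    intro f
    exact transfer f
  rw [Nat.card_congr Eq1, card_weak n m hm S hSsub, hScard]

end RBAux

namespace RBAux

variable {V : Type*} [Fintype V]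

instance listingsFinite : Finite {l : List V // l.Nodup ∧ ∀ x, x ∈ l} := by
  classical
  refine Finite.of_injective
    (fun l => (⟨l.1, l.2.1⟩ : {l : List V // l.Nodup})) ?_
  intro a b h
  apply Subtype.ext
  have h2 := congrArg Subtype.val h
  simpa using h2

noncomputable instance : Fintype {l : List V // l.Nodup ∧ ∀ x, x ∈ l} :=
  Fintype.ofFinite _

lemma fiber_finite (m : ℕ) (P : (V → ℕ) → Prop) :
    Finite {f : V → ℕ // (∀ x, 1 ≤ f x ∧ f x ≤ m) ∧ P f} := by
  refine Finite.of_injective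
    (fun f => (fun x => (⟨f.1 x, by have := (f.2.1 x).2; omega⟩ : Fin (m + 1)))) ?_
  intro a b h
  refine Subtype.ext (funext fun x => ?_)
  exact congrArg Fin.val (congrFun h x)

lemma RB_eq_sum (E : V → V → Prop) (m : ℕ) :
    RBCount V E m = ∑ l : {l : List V // l.Nodup ∧ ∀ x, x ∈ l},
      Nat.card {f : V → ℕ // (∀ x, 1 ≤ f x ∧ f x ≤ m) ∧ Friendly E f l.1} := by
  classical
  rw [RBCount]
  have e : {p : (V → ℕ) × List V // (∀ x, 1 ≤ p.1 x ∧ p.1 x ≤ m) ∧ p.2.Nodup ∧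
        (∀ x, x ∈ p.2) ∧ Friendly E p.1 p.2}
      ≃ Σ l : {l : List V // l.Nodup ∧ ∀ x, x ∈ l},
        {f : V → ℕ // (∀ x, 1 ≤ f x ∧ f x ≤ m) ∧ Friendly E f l.1} :=
    { toFun := fun x => ⟨⟨x.1.2, x.2.2.1, x.2.2.2.1⟩, ⟨x.1.1, x.2.1, x.2.2.2.2⟩⟩
      invFun := fun y => ⟨(y.2.1, y.1.1), y.2.2.1, y.1.2.1, y.1.2.2, y.2.2.2⟩
      left_inv := fun x => rfl
      right_inv := fun y => rfl }
  rw [Nat.card_congr e]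
  letI F : ∀ l : {l : List V // l.Nodup ∧ ∀ x, x ∈ l},
      Fintype {f : V → ℕ // (∀ x, 1 ≤ f x ∧ f x ≤ m) ∧ Friendly E f l.1} :=
    fun l => @Fintype.ofFinite _ (fiber_finite m _)
  rw [Nat.card_eq_fintype_card, Fintype.card_sigma]
  exact Finset.sum_congr rfl fun l _ => (Nat.card_eq_fintype_card).symm

end RBAux

/-- Reciprocity for the Redei-Berge polynomial: if `p` interpolates `N_X` and `q`
interpolates `N_{complement of X}` at positive integers, then `p(-x) = (-1)^n q(x)`
as polynomials; in particular `p(-m) = (-1)^n q(m)` for all integers `m`. -/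
theorem RB_reciprocity {V : Type*} [Fintype V]
    (E : V → V → Prop) (hE : ∀ x, ¬ E x x)
    (p q : Polynomial ℚ)
    (hp : ∀ m : ℕ, 1 ≤ m → p.eval (m : ℚ) = RBCount V E m)
    (hq : ∀ m : ℕ, 1 ≤ m → q.eval (m : ℚ) = RBCount V (complEdge E) m) :
    p.comp (-Polynomial.X) = (-1) ^ (Fintype.card V) * q ∧
      ∀ m : ℤ, p.eval (-(m : ℚ)) = (-1) ^ (Fintype.card V) * q.eval (m : ℚ) := by
  classical
  set n := Fintype.card V with hn
  let a : {l : List V // l.Nodup ∧ ∀ x, x ∈ l} → ℕ := fun l => RBAux.ecount E l.1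
  have hlen : ∀ l : {l : List V // l.Nodup ∧ ∀ x, x ∈ l}, l.1.length = n :=
    fun l => RBAux.listing_length l.1 l.2.1 l.2.2
  have ha : ∀ l, a l ≤ n - 1 := fun l => by
    have h1 := RBAux.ecount_le E l.1
    rw [hlen l] at h1
    exact h1
  set P : Polynomial ℚ :=
    ∑ l : {l : List V // l.Nodup ∧ ∀ x, x ∈ l}, RBAux.bpoly n (n - 1 - a l) with hP
  set Q : Polynomial ℚ :=
    ∑ l : {l : List V // l.Nodup ∧ ∀ x, x ∈ l}, RBAux.bpoly n (a l) with hQ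
  have hPeval : ∀ m : ℕ, 1 ≤ m → P.eval (m : ℚ) = (RBCount V E m : ℚ) := by
    intro m hm
    rw [hP, Polynomial.eval_finset_sum, RBAux.RB_eq_sum E m, Nat.cast_sum]
    refine Finset.sum_congr rfl fun l _ => ?_
    rw [RBAux.bpoly_eval, RBAux.count_fixed E m hm l.1 l.2.1 l.2.2, ← hn]
  have hQeval : ∀ m : ℕ, 1 ≤ m → Q.eval (m : ℚ) = (RBCount V (complEdge E) m : ℚ) := by
    intro m hm
    rw [hQ, Polynomial.eval_finset_sum, RBAux.RB_eq_sum (complEdge E) m, Nat.cast_sum]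
    refine Finset.sum_congr rfl fun l _ => ?_
    rw [RBAux.bpoly_eval, RBAux.count_fixed (complEdge E) m hm l.1 l.2.1 l.2.2, ← hn]
    have h1 : RBAux.ecount (complEdge E) l.1 = (n - 1) - a l := by
      rw [RBAux.ecount_compl E l.1 l.2.1, hlen l]
    rw [h1, Nat.sub_sub_self (ha l)]
  have hpP : p = P := by
    apply Polynomial.eq_of_infinite_eval_eq
    apply Set.Infinite.mono (s := Set.range (fun k : ℕ => ((k + 1 : ℕ) : ℚ)))
    · rintro x ⟨k, rfl⟩
      show p.eval _ = P.eval _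
      rw [hp (k + 1) (by omega), hPeval (k + 1) (by omega)]
    · exact Set.infinite_range_of_injective (fun a b h => by
        have : (a : ℚ) + 1 = (b : ℚ) + 1 := by push_cast at h; exact_mod_cast h
        exact_mod_cast (by linarith : (a : ℚ) = b))
  have hqQ : q = Q := by
    apply Polynomial.eq_of_infinite_eval_eq
    apply Set.Infinite.mono (s := Set.range (fun k : ℕ => ((k + 1 : ℕ) : ℚ)))
    · rintro x ⟨k, rfl⟩
      show q.eval _ = Q.eval _
      rw [hq (k + 1) (by omega), hQeval (k + 1) (by omega)]
    · exact Set.infinite_range_of_injective (fun a b h => by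
        have : (a : ℚ) + 1 = (b : ℚ) + 1 := by push_cast at h; exact_mod_cast h
        exact_mod_cast (by linarith : (a : ℚ) = b))
  have hcomp : P.comp (-Polynomial.X) = (-1) ^ n * Q := by
    rw [hP, hQ, Polynomial.sum_comp, Finset.mul_sum]
    refine Finset.sum_congr rfl fun l _ => ?_
    rw [RBAux.bpoly_reflect n (n - 1 - a l) (Nat.sub_le _ _), Nat.sub_sub_self (ha l)]
  have hmain : p.comp (-Polynomial.X) = (-1) ^ n * q := by
    rw [hpP, hqQ]
    exact hcomp
  refine ⟨hmain, fun m => ?_⟩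
  have h2 : p.eval (-(m : ℚ)) = (p.comp (-Polynomial.X)).eval (m : ℚ) := by
    rw [Polynomial.eval_comp, Polynomial.eval_neg, Polynomial.eval_X]
  rw [h2, hmain, Polynomial.eval_mul, Polynomial.eval_pow, Polynomial.eval_neg,
    Polynomial.eval_one]
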